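/- Let i be a continuous ℝ≥0-bilinear symmetric pairing on a cone V, φ a linear automorphism of V preserving i, and λ₋ ∈ V with φ(λ₋) = α^{-1}·λ₋ for some α > 1. Fix ν ∈ V and suppose there are constants C₁, C₂ > 0 with i(μ, λ₋) ≤ C₁·i(μ, ν) for all μ ∈ V, and i(μ, λ₋) ≥ C₂·i(μ, ν) for all μ in a subset K ⊆ V. Then for all μ ∈ K and all n ≥ 0: i(φⁿ(μ), ν) ≥ (C₂/C₁)·αⁿ·i(μ, ν). -/
import Mathlib


open scoped NNReal

/-- Abstract "south" lemma: if `φ` preserves the pairing `i`, contracts `lamMinus` by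
`α⁻¹` with `α > 1`, and `i (·, lamMinus)` is comparable to `i (·, ν)` (above on all of
`V`, below on `K`), then `i (φⁿ μ, ν) ≥ (C₂/C₁)·αⁿ·i(μ, ν)` for `μ ∈ K`. -/
theorem stmt11 {V : Type*} [AddCommMonoid V] [Module ℝ≥0 V] [TopologicalSpace V]
    (i : V → V → ℝ≥0)
    (hcont : Continuous fun p : V × V => i p.1 p.2)
    (hsymm : ∀ μ ν, i μ ν = i ν μ)
    (hbilin : ∀ (a b : ℝ≥0) (μ μ' ν : V),
      i (a • μ + b • μ') ν = a * i μ ν + b * i μ' ν)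
    (φ ψ : V →ₗ[ℝ≥0] V) (hinv₁ : ∀ v, ψ (φ v) = v) (hinv₂ : ∀ v, φ (ψ v) = v)
    (hpres : ∀ μ ν, i (φ μ) (φ ν) = i μ ν)
    (lamMinus : V) (α : ℝ≥0) (hα : 1 < α) (heig : φ lamMinus = α⁻¹ • lamMinus)
    (ν : V) (K : Set V) (C₁ C₂ : ℝ≥0) (hC₁ : 0 < C₁) (hC₂ : 0 < C₂)
    (hupper : ∀ μ : V, i μ lamMinus ≤ C₁ * i μ ν)
    (hlower : ∀ μ ∈ K, C₂ * i μ ν ≤ i μ lamMinus) :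
    ∀ μ ∈ K, ∀ n : ℕ, (C₂ / C₁) * α ^ n * i μ ν ≤ i ((φ ^ n) μ) ν := by
  have hα0 : α ≠ 0 := (zero_lt_one.trans hα).ne'
  -- homogeneity in the first argument
  have hhom : ∀ (a : ℝ≥0) (μ ν : V), i (a • μ) ν = a * i μ ν := by
    intro a μ ν
    have := hbilin a 0 μ 0 ν
    simpa using this
  -- ψ lamMinus = α • lamMinus
  have hψlam : ψ lamMinus = α • lamMinus := by
    have h := congrArg ψ heig
    rw [hinv₁] at h
    have := congrArg (α • ·) h
    simp only [map_smul, smul_smul, mul_inv_cancel₀ hα0, one_smul] at this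
    simpa [map_smul] using this.symm
  -- key identity: i (φⁿ μ, lamMinus) = αⁿ * i(μ, lamMinus)
  have key : ∀ (μ : V) (n : ℕ), i ((φ ^ n) μ) lamMinus = α ^ n * i μ lamMinus := by
    intro μ n
    induction n with
    | zero => simp
    | succ n ih =>
      have step : ∀ v : V, i (φ v) lamMinus = α * i v lamMinus := by
        intro v
        calc i (φ v) lamMinus = i (φ v) (φ (ψ lamMinus)) := by rw [hinv₂]
          _ = i v (ψ lamMinus) := hpres v (ψ lamMinus)
          _ = α * i v lamMinus := by
              rw [hψlam, hsymm, hhom, hsymm]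
      have : (φ ^ (n + 1)) μ = φ ((φ ^ n) μ) := by
        rw [pow_succ']
        rfl
      rw [this, step, ih, pow_succ']
      ring
  intro μ hμ n
  have h1 : i ((φ ^ n) μ) lamMinus ≤ C₁ * i ((φ ^ n) μ) ν := hupper _
  have h2 : C₂ * i μ ν ≤ i μ lamMinus := hlower μ hμ
  have h3 : α ^ n * (C₂ * i μ ν) ≤ C₁ * i ((φ ^ n) μ) ν := by
    calc α ^ n * (C₂ * i μ ν) ≤ α ^ n * i μ lamMinus := by
          exact mul_le_mul_right h2 _
      _ = i ((φ ^ n) μ) lamMinus := (key μ n).symm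
      _ ≤ C₁ * i ((φ ^ n) μ) ν := h1
  rw [div_mul_eq_mul_div, div_mul_eq_mul_div, div_le_iff₀ hC₁]
  calc C₂ * α ^ n * i μ ν = α ^ n * (C₂ * i μ ν) := by ring
    _ ≤ C₁ * i ((φ ^ n) μ) ν := h3
    _ = i ((φ ^ n) μ) ν * C₁ := by ring
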